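/- Let S be a self-adjoint operator on an oriented 2-dimensional inner product space with det S = κ < 0, let Q be the π/2-rotation, and let X = X₁v₁ + X₂v₂ be written in a basis v₁,v₂ of null directions of Π(·,·) = ⟨S·,·⟩ normalized so that Π(v₁,v₂) ≠ 0. If Π(X,X) ≠ 0, then QSX is proportional to X₁v₁ − X₂v₂, with proportionality factor σ satisfying σ² = −κ; consequently ρ(X)·QSX = ± (X₁v₁ − X₂v₂), where ρ(X) = sign(Π(X,X))/√(−κ), the sign depending only on the orientation datum sign det(v₁, v₂) and on sign(X₁X₂). -/

import Mathlib

open scoped RealInnerProductSpace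

set_option maxHeartbeats 1000000

/-- In asymptotic (null) directions `v₁, v₂` of `Π(·,·) = ⟪S·,·⟫` on a
2-dimensional oriented inner product space with `κ = det S < 0`, for
`X = X₁v₁ + X₂v₂` with `Π(X,X) ≠ 0` (equivalently `X₁X₂ ≠ 0`) the rotated vector
`QSX` is proportional to `X₁v₁ - X₂v₂`, with factor `σ` satisfying `σ² = -κ`;
consequently `ρ(X)·QSX = ±(X₁v₁ - X₂v₂)`, where
`ρ(X) = sign(Π(X,X))/√(-κ)`, the sign depending only on the orientation and on
`sign(X₁X₂)`. -/
theorem stmt18 {V : Type*} [NormedAddCommGroup V] [InnerProductSpace ℝ V]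
    [FiniteDimensional ℝ V]
    (e₁ e₂ : V)
    (he₁ : ⟪e₁, e₁⟫ = 1) (he₂ : ⟪e₂, e₂⟫ = 1) (he₁₂ : ⟪e₁, e₂⟫ = 0)
    (Q : V →ₗ[ℝ] V) (hQ : ∀ α : V, Q α = ⟪α, e₂⟫ • e₁ - ⟪α, e₁⟫ • e₂)
    (S : V →ₗ[ℝ] V) (hS : ∀ x y : V, ⟪S x, y⟫ = ⟪x, S y⟫)
    (κ : ℝ) (hκ : κ = LinearMap.det S) (hκneg : κ < 0)
    (v₁ v₂ : V) (hnull₁ : ⟪S v₁, v₁⟫ = 0) (hnull₂ : ⟪S v₂, v₂⟫ = 0)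
    (hnd : ⟪S v₁, v₂⟫ ≠ 0)
    (hspan : ∀ v : V, ∃ a b : ℝ, v = a • v₁ + b • v₂) :
    (∃ σ : ℝ, σ ^ 2 = -κ ∧
      ∀ X₁ X₂ : ℝ, Q (S (X₁ • v₁ + X₂ • v₂)) = σ • (X₁ • v₁ - X₂ • v₂)) ∧
    ∃ s : ℝ, (s = 1 ∨ s = -1) ∧
      (∀ X₁ X₂ : ℝ, 0 < X₁ * X₂ →
        (Real.sign ⟪S (X₁ • v₁ + X₂ • v₂), X₁ • v₁ + X₂ • v₂⟫ /
            Real.sqrt (-κ)) • Q (S (X₁ • v₁ + X₂ • v₂)) =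
          s • (X₁ • v₁ - X₂ • v₂)) ∧
      (∀ X₁ X₂ : ℝ, X₁ * X₂ < 0 →
        (Real.sign ⟪S (X₁ • v₁ + X₂ • v₂), X₁ • v₁ + X₂ • v₂⟫ /
            Real.sqrt (-κ)) • Q (S (X₁ • v₁ + X₂ • v₂)) =
          (-s) • (X₁ • v₁ - X₂ • v₂)) := by
  have hsym : ∀ v w : V, ⟪S v, w⟫ = ⟪S w, v⟫ := fun v w => by
    rw [hS, real_inner_comm]
  have hQskew : ∀ w : V, ⟪Q w, w⟫ = 0 := by
    intro w
    rw [hQ]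
    simp only [inner_sub_left, real_inner_smul_left, real_inner_comm e₁ w,
      real_inner_comm e₂ w]
    ring
  have hQadj : ∀ w z : V, ⟪Q w, z⟫ = -⟪w, Q z⟫ := by
    intro w z
    rw [hQ w, hQ z]
    simp only [inner_sub_left, inner_sub_right, real_inner_smul_left,
      real_inner_smul_right, real_inner_comm e₁ z, real_inner_comm e₂ z,
      real_inner_comm e₁ w, real_inner_comm e₂ w]
    ring
  have hSv : ∀ a b : ℝ, S (a • v₁ + b • v₂) = a • S v₁ + b • S v₂ := fun a b => by
    simp [map_add, map_smul]
  -- Q S v₁ = σ • v₁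
  obtain ⟨σ, β, h1⟩ := hspan (Q (S v₁))
  have hβ : β = 0 := by
    have h0 : ⟪S (Q (S v₁)), v₁⟫ = 0 := by
      rw [hS]; exact hQskew _
    rw [h1, hSv] at h0
    simp only [inner_add_left, real_inner_smul_left, hnull₁, hsym v₂ v₁,
      mul_zero, zero_add] at h0
    exact (mul_eq_zero.mp h0).resolve_right hnd
  rw [hβ, zero_smul, add_zero] at h1
  -- Q S v₂ = δ • v₂
  obtain ⟨γ, δ, h2⟩ := hspan (Q (S v₂))
  have hγ : γ = 0 := by
    have h0 : ⟪S (Q (S v₂)), v₂⟫ = 0 := by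
      rw [hS]; exact hQskew _
    rw [h2, hSv] at h0
    simp only [inner_add_left, real_inner_smul_left, hnull₂, mul_zero,
      add_zero] at h0
    exact (mul_eq_zero.mp h0).resolve_right hnd
  rw [hγ, zero_smul, zero_add] at h2
  -- δ = -σ
  have hδ : δ = -σ := by
    have ea : ⟪S (Q (S v₁)), v₂⟫ = σ * ⟪S v₁, v₂⟫ := by
      rw [h1, map_smul, real_inner_smul_left]
    have eb : ⟪S (Q (S v₁)), v₂⟫ = -(δ * ⟪S v₁, v₂⟫) := by
      rw [hS, hQadj, h2, real_inner_smul_right, hS]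
    have hcomb : (σ + δ) * ⟪S v₁, v₂⟫ = 0 := by
      have := ea.symm.trans eb
      ring_nf
      ring_nf at this
      linarith
    have := (mul_eq_zero.mp hcomb).resolve_right hnd
    linarith
  -- basis from v₁, v₂
  have hv₂0 : v₂ ≠ 0 := fun h => hnd (by simp [h])
  have hli : LinearIndependent ℝ ![v₁, v₂] := by
    rw [linearIndependent_fin2]
    refine ⟨by simpa using hv₂0, fun a h => ?_⟩
    apply hnd
    have : (⟪S v₁, v₂⟫ : ℝ) = ⟪S (a • v₂), v₂⟫ := by
      simp only [Matrix.cons_val_one, Matrix.head_cons, Matrix.cons_val_zero] at h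
      rw [h]
    rw [this, map_smul, real_inner_smul_left, hnull₂, mul_zero]
  have htop : ⊤ ≤ Submodule.span ℝ (Set.range ![v₁, v₂]) := by
    intro v _
    obtain ⟨a, b, rfl⟩ := hspan v
    exact Submodule.add_mem _
      (Submodule.smul_mem _ _ (Submodule.subset_span ⟨0, rfl⟩))
      (Submodule.smul_mem _ _ (Submodule.subset_span ⟨1, rfl⟩))
  let B : Module.Basis (Fin 2) ℝ V := Module.Basis.mk hli htop
  have hB0 : B 0 = v₁ := by simp [B]
  have hB1 : B 1 = v₂ := by simp [B]
  have hdetQS : LinearMap.det (Q ∘ₗ S) = -(σ * σ) := by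
    rw [← LinearMap.det_toMatrix B, Matrix.det_fin_two]
    have t00 : (LinearMap.toMatrix B B) (Q ∘ₗ S) 0 0 = σ := by
      rw [LinearMap.toMatrix_apply, LinearMap.comp_apply, hB0, h1, ← hB0,
        map_smul, Module.Basis.repr_self]
      simp
    have t01 : (LinearMap.toMatrix B B) (Q ∘ₗ S) 0 1 = 0 := by
      rw [LinearMap.toMatrix_apply, LinearMap.comp_apply, hB1, h2, ← hB1,
        map_smul, Module.Basis.repr_self]
      simp
    have t10 : (LinearMap.toMatrix B B) (Q ∘ₗ S) 1 0 = 0 := by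
      rw [LinearMap.toMatrix_apply, LinearMap.comp_apply, hB0, h1, ← hB0,
        map_smul, Module.Basis.repr_self]
      simp
    have t11 : (LinearMap.toMatrix B B) (Q ∘ₗ S) 1 1 = -σ := by
      rw [LinearMap.toMatrix_apply, LinearMap.comp_apply, hB1, h2, hδ, ← hB1,
        map_smul, Module.Basis.repr_self]
      simp
    rw [t00, t01, t10, t11]
    ring
  -- det Q = 1
  have hfr : Module.finrank ℝ V = 2 := by
    rw [Module.finrank_eq_card_basis B, Fintype.card_fin]
  have hlie : LinearIndependent ℝ ![e₁, e₂] := by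
    rw [linearIndependent_fin2]
    constructor
    · simp only [Matrix.cons_val_one, Matrix.head_cons, Matrix.cons_val_zero]
      intro h
      rw [h, inner_zero_left] at he₂
      exact one_ne_zero he₂.symm
    · intro a h
      simp only [Matrix.cons_val_one, Matrix.head_cons, Matrix.cons_val_zero] at h
      have : (⟪e₁, e₁⟫ : ℝ) = ⟪a • e₂, e₁⟫ := by rw [h]
      rw [he₁, real_inner_smul_left, real_inner_comm e₁ e₂, he₁₂, mul_zero] at this
      exact one_ne_zero this
  let E : Module.Basis (Fin 2) ℝ V :=
    basisOfLinearIndependentOfCardEqFinrank hlie (by rw [Fintype.card_fin, hfr])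
  have hE : ⇑E = ![e₁, e₂] := coe_basisOfLinearIndependentOfCardEqFinrank _ _
  have hE0 : E 0 = e₁ := by rw [hE]; rfl
  have hE1 : E 1 = e₂ := by rw [hE]; rfl
  have hQe₁ : Q e₁ = -e₂ := by
    rw [hQ, he₁₂, he₁, zero_smul, one_smul, zero_sub]
  have hQe₂ : Q e₂ = e₁ := by
    rw [hQ, he₂, real_inner_comm e₁ e₂, he₁₂, zero_smul, one_smul, sub_zero]
  have hdetQ : LinearMap.det Q = 1 := by
    rw [← LinearMap.det_toMatrix E, Matrix.det_fin_two]
    have t00 : (LinearMap.toMatrix E E) Q 0 0 = 0 := by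
      rw [LinearMap.toMatrix_apply, hE0, hQe₁, ← hE1, map_neg, Module.Basis.repr_self]
      simp
    have t01 : (LinearMap.toMatrix E E) Q 0 1 = 1 := by
      rw [LinearMap.toMatrix_apply, hE1, hQe₂, ← hE0, Module.Basis.repr_self]
      simp
    have t10 : (LinearMap.toMatrix E E) Q 1 0 = -1 := by
      rw [LinearMap.toMatrix_apply, hE0, hQe₁, ← hE1, map_neg, Module.Basis.repr_self]
      simp
    have t11 : (LinearMap.toMatrix E E) Q 1 1 = 0 := by
      rw [LinearMap.toMatrix_apply, hE1, hQe₂, ← hE0, Module.Basis.repr_self]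
      simp
    rw [t00, t01, t10, t11]
    ring
  have hσκ : σ ^ 2 = -κ := by
    have := LinearMap.det_comp Q S
    rw [hdetQS, hdetQ, one_mul, ← hκ] at this
    nlinarith [this]
  have hmain : ∀ X₁ X₂ : ℝ, Q (S (X₁ • v₁ + X₂ • v₂)) = σ • (X₁ • v₁ - X₂ • v₂) := by
    intro X₁ X₂
    rw [hSv, map_add, map_smul, map_smul, h1, h2, hδ]
    module
  refine ⟨⟨σ, hσκ, hmain⟩, ?_⟩
  have hσ0 : σ ≠ 0 := by
    intro h
    rw [h] at hσκ
    simp at hσκ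
    linarith
  have hsqrt : Real.sqrt (-κ) = |σ| := by
    rw [← hσκ, Real.sqrt_sq_eq_abs]
  have hPi : ∀ X₁ X₂ : ℝ, ⟪S (X₁ • v₁ + X₂ • v₂), X₁ • v₁ + X₂ • v₂⟫
      = 2 * X₁ * X₂ * ⟪S v₁, v₂⟫ := by
    intro X₁ X₂
    rw [hSv]
    simp only [inner_add_left, inner_add_right, real_inner_smul_left,
      real_inner_smul_right, hnull₁, hnull₂, hsym v₂ v₁]
    ring
  set c := (⟪S v₁, v₂⟫ : ℝ) with hc
  refine ⟨Real.sign c * (σ / |σ|), ?_, ?_, ?_⟩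
  · rcases lt_or_gt_of_ne hnd with hcneg | hcpos
    · rcases lt_or_gt_of_ne hσ0 with hσneg | hσpos
      · left; rw [Real.sign_of_neg hcneg, abs_of_neg hσneg]; field_simp
      · right; rw [Real.sign_of_neg hcneg, abs_of_pos hσpos]; field_simp
    · rcases lt_or_gt_of_ne hσ0 with hσneg | hσpos
      · right; rw [Real.sign_of_pos hcpos, abs_of_neg hσneg]; field_simp
      · left; rw [Real.sign_of_pos hcpos, abs_of_pos hσpos]; field_simp
  · intro X₁ X₂ hX
    rw [hPi, hmain, hsqrt, smul_smul]
    congr 1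
    have h2c : Real.sign (2 * X₁ * X₂ * c) = Real.sign c := by
      rcases lt_or_gt_of_ne hnd with hcneg | hcpos
      · rw [Real.sign_of_neg hcneg,
          Real.sign_of_neg (by linarith [mul_neg_of_pos_of_neg hX hcneg] :
            2 * X₁ * X₂ * c < 0)]
      · rw [Real.sign_of_pos hcpos,
          Real.sign_of_pos (by linarith [mul_pos hX hcpos] :
            0 < 2 * X₁ * X₂ * c)]
    rw [h2c]
    field_simp
  · intro X₁ X₂ hX
    rw [hPi, hmain, hsqrt, smul_smul]
    congr 1
    have h2c : Real.sign (2 * X₁ * X₂ * c) = -Real.sign c := by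
      rcases lt_or_gt_of_ne hnd with hcneg | hcpos
      · rw [Real.sign_of_neg hcneg,
          Real.sign_of_pos (by linarith [mul_pos_of_neg_of_neg hX hcneg] :
            0 < 2 * X₁ * X₂ * c)]
        norm_num
      · rw [Real.sign_of_pos hcpos,
          Real.sign_of_neg (by linarith [mul_neg_of_neg_of_pos hX hcpos] :
            2 * X₁ * X₂ * c < 0)]
    rw [h2c]
    field_simp
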